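/- Let R be a simple unital ring, let X be a finite nonempty set, and let G be a finite group acting on R by ring automorphisms in such a way that every non-identity element of G acts by an outer automorphism of R, and acting transitively on X. Then the crossed product ring (∏_{x∈X} R) ⋊ G is a simple ring. -/

import Mathlib

set_option linter.unusedSectionVars false

open Finset

/-- The crossed product `(∏_{x ∈ X} R) ⋊ G` : its underlying type is that of functions
`G → (∏_{x ∈ X} R)`, thought of as formal sums `∑_g a_g · g` with `a_g ∈ ∏_{x ∈ X} R`. -/
def CrossedProduct (R X G : Type) := G → X → R

namespace CrossedProduct

variable {R X G : Type} [Ring R] [Group G] [Fintype G] [DecidableEq G]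
  [MulSemiringAction G R] [MulAction G X]

/-- The action of `G` on `∏_{x ∈ X} R` combining the action on `R` with the
permutation action on the coordinates: `(g · a)(x) = g · (a (g⁻¹ · x))`. -/
def act (g : G) (a : X → R) : X → R := fun x => g • a (g⁻¹ • x)

lemma act_mul (g : G) (a b : X → R) : act g (a * b) = act g a * act g b := by
  funext x; simp [act, smul_mul']

lemma act_act (g h : G) (a : X → R) : act g (act h a) = act (g * h) a := by
  funext x; simp [act, mul_smul, mul_inv_rev]

lemma act_one (g : G) : act g (1 : X → R) = 1 := by
  funext x; simp [act]

lemma one_act (a : X → R) : act (1 : G) a = a := by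
  funext x; simp [act]

lemma act_zero (g : G) : act g (0 : X → R) = 0 := by
  funext x; simp [act]

lemma act_add (g : G) (a b : X → R) : act g (a + b) = act g a + act g b := by
  funext x; simp [act]

lemma act_sum {ι : Type*} (g : G) (s : Finset ι) (f : ι → X → R) :
    act g (∑ i ∈ s, f i) = ∑ i ∈ s, act g (f i) := by
  funext x; simp [act, Finset.sum_apply, Finset.smul_sum]

instance : AddCommGroup (CrossedProduct R X G) :=
  inferInstanceAs (AddCommGroup (G → X → R))

/-- Multiplication on the crossed product, determined by
`(a·g) * (b·h) = (a * (g·b)) · (g*h)`. -/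
instance : Mul (CrossedProduct R X G) :=
  ⟨fun f h k => ∑ g : G, f g * act g (h (g⁻¹ * k))⟩

lemma mul_def (f h : CrossedProduct R X G) (k : G) :
    (f * h) k = ∑ g : G, f g * act g (h (g⁻¹ * k)) := rfl

instance : One (CrossedProduct R X G) :=
  ⟨fun k => if k = 1 then 1 else 0⟩

lemma one_def (k : G) :
    (1 : CrossedProduct R X G) k = if k = 1 then 1 else 0 := rfl

instance instRing : Ring (CrossedProduct R X G) :=
  { (inferInstance : AddCommGroup (CrossedProduct R X G)),
    (inferInstance : Mul (CrossedProduct R X G)),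
    (inferInstance : One (CrossedProduct R X G)) with
    left_distrib := by
      intro f h l
      funext k
      show (f * (h + l)) k = (f * h) k + (f * l) k
      simp only [mul_def]
      rw [← Finset.sum_add_distrib]
      refine Finset.sum_congr rfl fun g _ => ?_
      have : (h + l) (g⁻¹ * k) = h (g⁻¹ * k) + l (g⁻¹ * k) := rfl
      rw [this, act_add, mul_add]
    right_distrib := by
      intro f h l
      funext k
      show ((f + h) * l) k = (f * l) k + (h * l) k
      simp only [mul_def]
      rw [← Finset.sum_add_distrib]
      refine Finset.sum_congr rfl fun g _ => ?_
      have : (f + h) g = f g + h g := rfl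
      rw [this, add_mul]
    zero_mul := by
      intro f
      funext k
      show (0 * f) k = 0
      simp only [mul_def]
      refine Finset.sum_eq_zero fun g _ => ?_
      have : (0 : CrossedProduct R X G) g = 0 := rfl
      rw [this, zero_mul]
    mul_zero := by
      intro f
      funext k
      show (f * 0) k = 0
      simp only [mul_def]
      refine Finset.sum_eq_zero fun g _ => ?_
      have : (0 : CrossedProduct R X G) (g⁻¹ * k) = 0 := rfl
      rw [this, act_zero, mul_zero]
    one_mul := by
      intro f
      funext k
      show (1 * f) k = f k
      simp only [mul_def, one_def]
      rw [Finset.sum_eq_single 1]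
      · simp [one_act]
      · intro g _ hg
        simp [hg]
      · simp
    mul_one := by
      intro f
      funext k
      show (f * 1) k = f k
      simp only [mul_def, one_def]
      rw [Finset.sum_eq_single k]
      · simp [act_one]
      · intro g _ hg
        have : ¬(g⁻¹ * k = 1) := by
          simpa [inv_mul_eq_one] using hg
        simp only [this, if_false]
        rw [act_zero, mul_zero]
      · simp
    mul_assoc := by
      intro f h l
      funext k
      show (f * h * l) k = (f * (h * l)) k
      simp only [mul_def]
      calc
        ∑ g' : G, (∑ g : G, f g * act g (h (g⁻¹ * g'))) * act g' (l (g'⁻¹ * k))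
            = ∑ g' : G, ∑ g : G,
                f g * act g (h (g⁻¹ * g')) * act g' (l (g'⁻¹ * k)) := by
              simp [Finset.sum_mul]
        _ = ∑ g : G, ∑ g' : G,
                f g * act g (h (g⁻¹ * g')) * act g' (l (g'⁻¹ * k)) :=
              Finset.sum_comm
        _ = ∑ g : G, ∑ u : G,
                f g * act g (h (g⁻¹ * (g * u))) * act (g * u) (l ((g * u)⁻¹ * k)) :=
              Finset.sum_congr rfl fun g _ => (Equiv.sum_comp (Equiv.mulLeft g) _).symm
        _ = ∑ g : G, ∑ u : G,
                f g * act g (h u) * act (g * u) (l (u⁻¹ * (g⁻¹ * k))) := by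
              refine Finset.sum_congr rfl fun g _ => Finset.sum_congr rfl fun u _ => ?_
              rw [inv_mul_cancel_left, mul_inv_rev]
              simp [mul_assoc]
        _ = ∑ g : G, f g * act g ((h * l) (g⁻¹ * k)) := by
              refine Finset.sum_congr rfl fun g _ => ?_
              rw [mul_def, act_sum, Finset.mul_sum]
              refine Finset.sum_congr rfl fun u _ => ?_
              rw [act_mul, act_act, mul_assoc] }

end CrossedProduct

namespace CrossedProduct

variable {R X G : Type} [Ring R] [Group G] [Fintype G] [DecidableEq G]
  [MulSemiringAction G R] [MulAction G X]

def single (g : G) (a : X → R) : CrossedProduct R X G := fun k => if k = g then a else 0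

lemma single_apply (g : G) (a : X → R) (k : G) :
    (single g a : CrossedProduct R X G) k = if k = g then a else 0 := rfl

lemma one_eq_single : (1 : CrossedProduct R X G) = single 1 1 := rfl

lemma single_one_mul (b : X → R) (h : CrossedProduct R X G) (k : G) :
    ((single 1 b * h : CrossedProduct R X G)) k = b * h k := by
  rw [mul_def, Finset.sum_eq_single 1]
  · simp [single_apply, one_act]
  · intro g _ hg; simp [single_apply, hg]
  · simp

lemma mul_single_one (h : CrossedProduct R X G) (b : X → R) (k : G) :
    ((h * single 1 b : CrossedProduct R X G)) k = h k * act k b := by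
  rw [mul_def, Finset.sum_eq_single k]
  · simp [single_apply]
  · intro g _ hg
    rw [single_apply, if_neg (by simpa [inv_mul_eq_one] using hg), act_zero, mul_zero]
  · simp

lemma mul_single (f : CrossedProduct R X G) (g₀ : G) (k : G) :
    ((f * single g₀ 1 : CrossedProduct R X G)) k = f (k * g₀⁻¹) := by
  rw [mul_def, Finset.sum_eq_single (k * g₀⁻¹)]
  · rw [single_apply, if_pos (by group), act_one, mul_one]
  · intro g _ hg
    rw [single_apply, if_neg, act_zero, mul_zero]
    intro hgg
    exact hg (by rw [← hgg]; group)
  · simp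

lemma single_mul (g₀ : G) (f : CrossedProduct R X G) (k : G) :
    ((single g₀ 1 * f : CrossedProduct R X G)) k = act g₀ (f (g₀⁻¹ * k)) := by
  rw [mul_def, Finset.sum_eq_single g₀]
  · rw [single_apply, if_pos rfl, one_mul]
  · intro g _ hg; rw [single_apply, if_neg hg, zero_mul]
  · simp

lemma conj_single (g : G) (a : X → R) :
    single g (1 : X → R) * single 1 a * single g⁻¹ (1 : X → R) = single 1 (act g a) := by
  funext k
  rw [mul_single, single_mul, inv_inv, single_apply, single_apply]
  by_cases hk : k = 1
  · subst hk; simp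
  · rw [if_neg hk, if_neg (by simp [inv_mul_eq_one, eq_comm, right_eq_mul, hk]), act_zero]

lemma outer_intertwiner {R G : Type} [Ring R] [IsSimpleRing R] [Group G] [MulSemiringAction G R]
    (g : G) (houter : ¬ ∃ u : Rˣ, ∀ r : R, g • r = (u : R) * r * (↑u⁻¹ : R))
    (c : R) (hc : ∀ r : R, r * c = c * (g • r)) : c = 0 := by
  by_contra hc0
  set T : Set R := {x | ∃ a b : R, x = a * c * b} with hT
  have hmulL : ∀ (x y : R), y ∈ AddSubgroup.closure T → x * y ∈ AddSubgroup.closure T := by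
    intro x y hy
    induction hy using AddSubgroup.closure_induction with
    | mem z hz =>
      obtain ⟨a, b, rfl⟩ := hz
      exact AddSubgroup.subset_closure ⟨x * a, b, by noncomm_ring⟩
    | zero => simpa using zero_mem _
    | add p q hp hq ihp ihq => rw [mul_add]; exact add_mem ihp ihq
    | neg p hp ihp => rw [mul_neg]; exact neg_mem ihp
  have hmulR : ∀ (x y : R), x ∈ AddSubgroup.closure T → x * y ∈ AddSubgroup.closure T := by
    intro x y hx
    induction hx using AddSubgroup.closure_induction with
    | mem z hz =>
      obtain ⟨a, b, rfl⟩ := hz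
      exact AddSubgroup.subset_closure ⟨a, b * y, by noncomm_ring⟩
    | zero => simpa using zero_mem _
    | add p q hp hq ihp ihq => rw [add_mul]; exact add_mem ihp ihq
    | neg p hp ihp => rw [neg_mul]; exact neg_mem ihp
  let J : TwoSidedIdeal R := TwoSidedIdeal.mk' (AddSubgroup.closure T : Set R)
    (zero_mem _) (fun hx hy => add_mem hx hy) (fun hx => neg_mem hx)
    (fun {x y} hy => hmulL x y hy) (fun {x y} hx => hmulR x y hx)
  have hcJ : c ∈ J := by
    rw [TwoSidedIdeal.mem_mk']
    exact AddSubgroup.subset_closure ⟨1, 1, by noncomm_ring⟩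
  have hJtop : J = ⊤ := by
    rcases IsSimpleRing.simple.eq_bot_or_eq_top J with h | h
    · rw [h, TwoSidedIdeal.mem_bot] at hcJ; exact absurd hcJ hc0
    · exact h
  have h1 : (1 : R) ∈ AddSubgroup.closure T := by
    have : (1 : R) ∈ J := by rw [hJtop]; exact TwoSidedIdeal.mem_top R
    rwa [TwoSidedIdeal.mem_mk'] at this
  have hleft : ∀ x ∈ AddSubgroup.closure T, ∃ t : R, x = t * c := by
    intro x hx
    induction hx using AddSubgroup.closure_induction with
    | mem z hz =>
      obtain ⟨a, b, rfl⟩ := hz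
      refine ⟨a * (g⁻¹ • b), ?_⟩
      have h := hc (g⁻¹ • b)
      rw [smul_inv_smul] at h
      rw [mul_assoc, ← h, mul_assoc]
    | zero => exact ⟨0, by noncomm_ring⟩
    | add p q hp hq ihp ihq =>
      obtain ⟨t, rfl⟩ := ihp; obtain ⟨s, rfl⟩ := ihq
      exact ⟨t + s, by noncomm_ring⟩
    | neg p hp ihp =>
      obtain ⟨t, rfl⟩ := ihp
      exact ⟨-t, by noncomm_ring⟩
  have hright : ∀ x ∈ AddSubgroup.closure T, ∃ s : R, x = c * s := by
    intro x hx
    induction hx using AddSubgroup.closure_induction with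
    | mem z hz =>
      obtain ⟨a, b, rfl⟩ := hz
      refine ⟨(g • a) * b, ?_⟩
      rw [← mul_assoc, ← hc a]
    | zero => exact ⟨0, by noncomm_ring⟩
    | add p q hp hq ihp ihq =>
      obtain ⟨t, rfl⟩ := ihp; obtain ⟨s, rfl⟩ := ihq
      exact ⟨t + s, by noncomm_ring⟩
    | neg p hp ihp =>
      obtain ⟨t, rfl⟩ := ihp
      exact ⟨-t, by noncomm_ring⟩
  obtain ⟨t, ht⟩ := hleft 1 h1
  obtain ⟨s, hs⟩ := hright 1 h1
  have hts : t = s := by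
    calc t = t * (c * s) := by rw [← hs, mul_one]
    _ = (t * c) * s := by noncomm_ring
    _ = s := by rw [← ht, one_mul]
  refine houter ⟨⟨t, c, ht.symm, by rw [hts]; exact hs.symm⟩, fun r => ?_⟩
  show g • r = t * r * c
  calc g • r = (t * c) * (g • r) := by rw [← ht, one_mul]
  _ = t * (c * (g • r)) := by noncomm_ring
  _ = t * (r * c) := by rw [← hc r]
  _ = t * r * c := by noncomm_ring

open scoped Classical in
noncomputable def suppF (w : CrossedProduct R X G) : Finset G :=
  Finset.univ.filter (fun k => w k ≠ 0)

lemma mem_suppF (w : CrossedProduct R X G) (k : G) : k ∈ suppF w ↔ w k ≠ 0 := by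
  classical
  simp [suppF]

lemma single_add (g : G) (a b : X → R) :
    (single g a + single g b : CrossedProduct R X G) = single g (a + b) := by
  funext k
  show (if k = g then a else 0) + (if k = g then b else 0) = if k = g then a + b else 0
  by_cases h : k = g <;> simp [h]

lemma single_zero (g : G) : (single g (0 : X → R) : CrossedProduct R X G) = 0 := by
  funext k
  show (if k = g then (0 : X → R) else 0) = 0
  simp

lemma single_sum {ι : Type*} (g : G) (s : Finset ι) (f : ι → X → R) :
    (∑ i ∈ s, single g (f i) : CrossedProduct R X G) = single g (∑ i ∈ s, f i) := by
  induction s using Finset.cons_induction with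
  | empty => simp [single_zero]
  | cons i s hi ih => rw [Finset.sum_cons, Finset.sum_cons, ih, single_add]

end CrossedProduct

open CrossedProduct

/-- Let `R` be a simple unital ring, `X` a finite nonempty set and `G` a
finite group acting on `R` by ring automorphisms, in such a way that every non-identity
element of `G` acts by an *outer* automorphism of `R`, and acting transitively on `X`.
Then the crossed product ring `(∏_{x ∈ X} R) ⋊ G` is a simple ring. -/
theorem crossedProduct_isSimpleRing
    (R X G : Type) [Ring R] [IsSimpleRing R] [Group G] [Fintype G] [DecidableEq G]
    [MulSemiringAction G R] [MulAction G X] [Fintype X] [Nonempty X]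
    (houter : ∀ g : G, g ≠ 1 → ¬ ∃ u : Rˣ, ∀ r : R, g • r = (u : R) * r * (↑u⁻¹ : R))
    (htrans : MulAction.IsPretransitive G X) :
    IsSimpleRing (CrossedProduct R X G) := by
  classical
  obtain ⟨x₁⟩ := ‹Nonempty X›
  -- nontriviality
  have hC_nontriv : (0 : CrossedProduct R X G) ≠ 1 := by
    intro h
    have h1 : (0 : CrossedProduct R X G) 1 = (1 : CrossedProduct R X G) 1 := by rw [h]
    have h2 : ((0 : CrossedProduct R X G) 1) x₁ = ((1 : CrossedProduct R X G) 1) x₁ := by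
      rw [h1]
    rw [one_def, if_pos rfl] at h2
    exact zero_ne_one h2
  haveI : Nontrivial (CrossedProduct R X G) := ⟨0, 1, hC_nontriv⟩
  refine IsSimpleRing.of_eq_bot_or_eq_top (fun I => ?_)
  by_cases hIbot : I = ⊥
  · exact Or.inl hIbot
  right
  rw [← TwoSidedIdeal.one_mem_iff]
  -- a nonzero element of I
  obtain ⟨z, hzI, hz0⟩ : ∃ z, z ∈ I ∧ z ≠ 0 := by
    by_contra hcon
    push_neg at hcon
    exact hIbot (SetLike.ext fun x =>
      ⟨fun h => by rw [TwoSidedIdeal.mem_bot]; exact hcon x h,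
       fun h => by rw [TwoSidedIdeal.mem_bot] at h; rw [h]; exact I.zero_mem⟩)
  -- minimal support size
  obtain ⟨f₀, hf₀I, hf₀0, hf₀card⟩ :
      ∃ w, w ∈ I ∧ w ≠ 0 ∧ (suppF w).card = sInf {n | ∃ w, w ∈ I ∧ w ≠ 0 ∧ (suppF w).card = n} :=
    Nat.sInf_mem (⟨_, z, hzI, hz0, rfl⟩ :
      Set.Nonempty {n | ∃ w, w ∈ I ∧ w ≠ 0 ∧ (suppF w).card = n})
  set n := sInf {n | ∃ w, w ∈ I ∧ w ≠ 0 ∧ (suppF w).card = n} with hn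
  have hmin : ∀ w, w ∈ I → (suppF w).card < n → w = 0 := by
    intro w hwI hlt
    by_contra hw0
    exact absurd hlt (not_lt.mpr (Nat.sInf_le ⟨w, hwI, hw0, rfl⟩))
  -- translate so that 1 is in the support
  obtain ⟨g₀, hg₀⟩ : ∃ g₀, f₀ g₀ ≠ 0 := by
    by_contra hcon
    push_neg at hcon
    exact hf₀0 (funext hcon)
  set f : CrossedProduct R X G := f₀ * single g₀⁻¹ 1 with hfdef
  have hfI : f ∈ I := I.mul_mem_right _ _ hf₀I
  have hfapp : ∀ k, f k = f₀ (k * g₀) := by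
    intro k
    rw [hfdef, mul_single, inv_inv]
  have hf1 : f 1 ≠ 0 := by rw [hfapp, one_mul]; exact hg₀
  have hfcard : (suppF f).card = n := by
    rw [← hf₀card]
    apply Finset.card_bij (fun k _ => k * g₀)
    · intro k hk
      rw [mem_suppF] at hk ⊢
      rwa [hfapp] at hk
    · intro a _ b _ hab
      exact mul_right_cancel hab
    · intro b hb
      refine ⟨b * g₀⁻¹, ?_, by group⟩
      rw [mem_suppF, hfapp, inv_mul_cancel_right]
      exact (mem_suppF _ _).mp hb
  have h1S : (1 : G) ∈ suppF f := (mem_suppF f 1).mpr hf1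
  have hn1 : 0 < n := hfcard ▸ Finset.card_pos.mpr ⟨1, h1S⟩
  -- the "coefficient at 1" ideal of ∏_X R
  set Jset : Set (X → R) :=
    {a | ∃ h, h ∈ I ∧ (∀ k, h k ≠ 0 → k ∈ suppF f) ∧ h 1 = a} with hJset
  obtain ⟨x₀, hx₀⟩ : ∃ x, f 1 x ≠ 0 := by
    by_contra hcon
    push_neg at hcon
    exact hf1 (funext hcon)
  -- construct a two-sided ideal of R from J
  have Kzero : (0 : R) ∈ {r : R | ∃ a ∈ Jset, a x₀ = r} := by
    refine ⟨0, ⟨0, I.zero_mem, ?_, rfl⟩, rfl⟩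
    intro k hk
    exact absurd rfl hk
  have Kadd : ∀ {x y : R}, x ∈ {r : R | ∃ a ∈ Jset, a x₀ = r} →
      y ∈ {r : R | ∃ a ∈ Jset, a x₀ = r} → x + y ∈ {r : R | ∃ a ∈ Jset, a x₀ = r} := by
    rintro x y ⟨a, ⟨h, hhI, hhs, hh1⟩, rfl⟩ ⟨a', ⟨h', hh'I, hh's, hh'1⟩, rfl⟩
    refine ⟨a + a', ⟨h + h', I.add_mem hhI hh'I, ?_, by rw [← hh1, ← hh'1]; rfl⟩, rfl⟩
    intro k hk
    by_cases h1 : h k = 0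
    · by_cases h2 : h' k = 0
      · exact absurd (show (h + h') k = 0 by show h k + h' k = 0; rw [h1, h2, add_zero]) hk
      · exact hh's k h2
    · exact hhs k h1
  have Kneg : ∀ {x : R}, x ∈ {r : R | ∃ a ∈ Jset, a x₀ = r} →
      -x ∈ {r : R | ∃ a ∈ Jset, a x₀ = r} := by
    rintro x ⟨a, ⟨h, hhI, hhs, hh1⟩, rfl⟩
    refine ⟨-a, ⟨-h, I.neg_mem hhI, ?_, by rw [← hh1]; rfl⟩, rfl⟩
    intro k hk
    refine hhs k fun h0 => hk ?_
    show -(h k) = 0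
    rw [h0, neg_zero]
  have KmulL : ∀ {x y : R}, y ∈ {r : R | ∃ a ∈ Jset, a x₀ = r} →
      x * y ∈ {r : R | ∃ a ∈ Jset, a x₀ = r} := by
    rintro x y ⟨a, ⟨h, hhI, hhs, hh1⟩, rfl⟩
    refine ⟨(fun _ => x) * a, ⟨single 1 (fun _ => x) * h, I.mul_mem_left _ _ hhI, ?_, ?_⟩, rfl⟩
    · intro k hk
      rw [single_one_mul] at hk
      refine hhs k fun h0 => hk ?_
      rw [h0, mul_zero]
    · rw [single_one_mul, hh1]
  have KmulR : ∀ {x y : R}, x ∈ {r : R | ∃ a ∈ Jset, a x₀ = r} →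
      x * y ∈ {r : R | ∃ a ∈ Jset, a x₀ = r} := by
    rintro x y ⟨a, ⟨h, hhI, hhs, hh1⟩, rfl⟩
    refine ⟨a * (fun _ => y), ⟨h * single 1 (fun _ => y), I.mul_mem_right _ _ hhI, ?_, ?_⟩, rfl⟩
    · intro k hk
      rw [mul_single_one] at hk
      refine hhs k fun h0 => hk ?_
      rw [h0, zero_mul]
    · rw [mul_single_one, hh1, one_act]
  have Kone : (1 : R) ∈ {r : R | ∃ a ∈ Jset, a x₀ = r} := by
    have hK := TwoSidedIdeal.mk' {r : R | ∃ a ∈ Jset, a x₀ = r} Kzero Kadd Kneg KmulL KmulR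
    rcases IsSimpleRing.simple.eq_bot_or_eq_top
      (TwoSidedIdeal.mk' {r : R | ∃ a ∈ Jset, a x₀ = r} Kzero Kadd Kneg KmulL KmulR)
      with hbot | htop
    · exfalso
      have : f 1 x₀ ∈ TwoSidedIdeal.mk' {r : R | ∃ a ∈ Jset, a x₀ = r} Kzero Kadd Kneg KmulL KmulR := by
        rw [TwoSidedIdeal.mem_mk']
        exact ⟨f 1, ⟨f, hfI, fun k hk => (mem_suppF f k).mpr hk, rfl⟩, rfl⟩
      rw [hbot, TwoSidedIdeal.mem_bot] at this
      exact hx₀ this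
    · have : (1 : R) ∈ TwoSidedIdeal.mk' {r : R | ∃ a ∈ Jset, a x₀ = r} Kzero Kadd Kneg KmulL KmulR := by
        rw [htop]; exact TwoSidedIdeal.mem_top R
      rwa [TwoSidedIdeal.mem_mk'] at this
  obtain ⟨a, ⟨h, hhI, hhs, hh1⟩, ha⟩ := Kone
  -- the idempotent e = indicator of x₀
  set e : X → R := fun x => if x = x₀ then 1 else 0 with he
  have he_comm : ∀ b : X → R, b * e = e * b := by
    intro b
    funext x
    show b x * e x = e x * b x
    by_cases hx : x = x₀ <;> simp [he, hx]
  have he0 : e ≠ 0 := by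
    intro hcon
    have := congrFun hcon x₀
    rw [he] at this
    simp at this
  set h' : CrossedProduct R X G := single 1 e * h * single 1 e with hh'def
  have hh'I : h' ∈ I := I.mul_mem_right _ _ (I.mul_mem_left _ _ hhI)
  have hh'app : ∀ k, h' k = (e * h k) * act k e := by
    intro k
    rw [hh'def, mul_single_one, single_one_mul]
  have hh'supp : ∀ k, h' k ≠ 0 → k ∈ suppF f := by
    intro k hk
    refine hhs k fun h0 => hk ?_
    rw [hh'app, h0, mul_zero, zero_mul]
  have hh'1 : h' 1 = e := by
    rw [hh'app, one_act, hh1]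
    funext x
    show (e x * a x) * e x = e x
    by_cases hx : x = x₀
    · subst hx
      rw [he]
      simp [ha]
    · simp [he, hx]
  -- minimality: intertwiner relations
  have hrel : ∀ (b : X → R) (k : G), b * h' k = h' k * act k b := by
    intro b k
    have hwI : single 1 b * h' - h' * single 1 b ∈ I :=
      I.sub_mem (I.mul_mem_left _ _ hh'I) (I.mul_mem_right _ _ hh'I)
    have hwapp : ∀ k, (single 1 b * h' - h' * single 1 b : CrossedProduct R X G) k
        = b * h' k - h' k * act k b := by
      intro k
      show (single 1 b * h' : CrossedProduct R X G) k - (h' * single 1 b : CrossedProduct R X G) k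
        = b * h' k - h' k * act k b
      rw [single_one_mul, mul_single_one]
    have hw0 : (single 1 b * h' - h' * single 1 b : CrossedProduct R X G) = 0 := by
      apply hmin _ hwI
      calc (suppF (single 1 b * h' - h' * single 1 b : CrossedProduct R X G)).card
          ≤ ((suppF f).erase 1).card := by
            apply Finset.card_le_card
            intro k hk
            rw [mem_suppF, hwapp] at hk
            rw [Finset.mem_erase]
            constructor
            · intro hk1
              subst hk1
              apply hk
              rw [hh'1, one_act, he_comm, sub_self]
            · refine hh'supp k fun h0 => hk ?_
              rw [h0, mul_zero, zero_mul, sub_zero]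
        _ = n - 1 := by rw [Finset.card_erase_of_mem h1S, hfcard]
        _ < n := Nat.sub_lt hn1 one_pos
    have := congrFun hw0 k
    rw [hwapp] at this
    exact sub_eq_zero.mp this
  -- outer action kills off-identity coefficients
  have hoff : ∀ k : G, k ≠ 1 → h' k = 0 := by
    intro k hk
    funext x
    show h' k x = 0
    by_cases hfix : k⁻¹ • x = x
    · apply outer_intertwiner k (houter k hk)
      intro r
      have hx := congrFun (hrel (fun y => if y = x then r else 0) k) x
      show r * h' k x = h' k x * (k • r)
      calc r * h' k x = (if x = x then r else 0) * h' k x := by rw [if_pos rfl]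
        _ = h' k x * (k • (if k⁻¹ • x = x then r else 0)) := by
            have : act k (fun y => if y = x then r else 0) x
                = k • (if k⁻¹ • x = x then r else 0) := rfl
            rw [← this]
            exact hx
        _ = h' k x * (k • r) := by rw [if_pos hfix]
    · have hx := congrFun (hrel (fun y => if y = x then (1 : R) else 0) k) x
      have h2 : act k (fun y => if y = x then (1 : R) else 0) x
          = k • (if k⁻¹ • x = x then (1 : R) else 0) := rfl
      have : (if x = x then (1:R) else 0) * h' k x
          = h' k x * (k • (if k⁻¹ • x = x then (1:R) else 0)) := by
        rw [← h2]; exact hx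
      rw [if_pos rfl, one_mul, if_neg hfix, smul_zero, mul_zero] at this
      exact this
  have hse : single 1 e ∈ I := by
    have : h' = single 1 e := by
      funext k
      by_cases hk : k = 1
      · subst hk
        rw [hh'1]
        show e = if (1:G) = 1 then e else 0
        rw [if_pos rfl]
      · rw [hoff k hk]
        show (0 : X → R) = if k = 1 then e else 0
        rw [if_neg hk]
    rwa [this] at hh'I
  -- move the idempotent around using transitivity
  have hex : ∀ x : X, (single 1 (fun y => if y = x then (1:R) else 0)
      : CrossedProduct R X G) ∈ I := by
    intro x
    obtain ⟨g, hg⟩ := htrans.exists_smul_eq x₀ x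
    have hmem : single g (1 : X → R) * single 1 e * single g⁻¹ (1 : X → R) ∈ I :=
      I.mul_mem_right _ _ (I.mul_mem_left _ _ hse)
    rw [conj_single] at hmem
    have hacte : act g e = fun y => if y = x then (1:R) else 0 := by
      funext y
      show g • e (g⁻¹ • y) = _
      by_cases hy : y = x
      · subst hy
        have hfix : g⁻¹ • y = x₀ := by rw [← hg, inv_smul_smul]
        rw [he]
        simp [hfix]
      · have hfix : g⁻¹ • y ≠ x₀ := fun hcon => hy (by rw [← hg, ← hcon, smul_inv_smul])
        rw [he]
        simp [hfix, hy]
    rwa [hacte] at hmem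
  have hone : (1 : CrossedProduct R X G)
      = ∑ x : X, (single 1 (fun y => if y = x then (1:R) else 0) : CrossedProduct R X G) := by
    have hsum : (∑ x : X, fun y => if y = x then (1:R) else 0) = (1 : X → R) := by
      funext y
      rw [Finset.sum_apply]
      simp
    rw [single_sum, hsum, ← one_eq_single]
  rw [hone]
  exact I.finsetSum_mem _ _ (fun x _ => hex x)
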